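/- For every interval representation R of G_β, we have ν_R(u) ≥ ν(G_β); that is, R contains a chain of strictly nested vertex intervals of length at least ν(G_β) whose outermost interval is the interval of the added vertex u. -/

import Mathlib

open Set

/-- An interval representation of a simple graph `G`: each vertex `v` gets a nonempty
closed interval `[l v, r v] ⊆ ℝ`, and two distinct vertices are adjacent iff their
intervals intersect. -/
structure IntervalRep {V : Type*} (G : SimpleGraph V) where
  l : V → ℝ
  r : V → ℝ
  le : ∀ v, l v ≤ r v
  adj_iff : ∀ u v : V, u ≠ v →
    (G.Adj u v ↔ (Icc (l u) (r u) ∩ Icc (l v) (r v)).Nonempty)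

namespace IntervalRep

variable {V : Type*} {G : SimpleGraph V}

/-- The interval of a vertex. -/
def itv (R : IntervalRep G) (v : V) : Set ℝ := Icc (R.l v) (R.r v)

/-- The nesting `ν(R)`: the maximum length of a chain of strictly nested vertex intervals. -/
noncomputable def nesting (R : IntervalRep G) : ℕ :=
  sSup {k : ℕ | ∃ f : Fin k → V, ∀ i j : Fin k, i < j → R.itv (f i) ⊂ R.itv (f j)}

/-- `ν_R(x)`: the maximum length of a chain of strictly nested vertex intervals whose
outermost interval is `I(x)` (counting `x` itself). -/
noncomputable def nuAt (R : IntervalRep G) (x : V) : ℕ :=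
  sSup {k : ℕ | ∃ f : Fin k → V,
    (∀ i j : Fin k, i < j → R.itv (f i) ⊂ R.itv (f j)) ∧
    ∃ h : 0 < k, f ⟨k - 1, by omega⟩ = x}

end IntervalRep

/-- A graph is an interval graph if it admits an interval representation. -/
def IsIntervalGraph {V : Type*} (G : SimpleGraph V) : Prop := Nonempty (IntervalRep G)

/-- The nesting number `ν(G)`: the minimum nesting over all interval representations. -/
noncomputable def nu {V : Type*} (G : SimpleGraph V) : ℕ :=
  sInf {n : ℕ | ∃ R : IntervalRep G, R.nesting = n}

/-- `G_α`: add vertices `u, a₁, a₂, b₁, b₂` (coded as `0,1,2,3,4`), with `u` adjacent to all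
of `G` and to `a₁, b₁`; `a₁ ~ a₂` and `b₁ ~ b₂`. -/
def Galpha {V : Type*} (G : SimpleGraph V) : SimpleGraph (V ⊕ Fin 5) :=
  SimpleGraph.fromRel fun x y =>
    match x, y with
    | Sum.inl a, Sum.inl b => G.Adj a b
    | Sum.inl _, Sum.inr i => i = 0
    | Sum.inr _, Sum.inl _ => False
    | Sum.inr i, Sum.inr j =>
        i = 0 ∧ j = 1 ∨ i = 1 ∧ j = 2 ∨ i = 0 ∧ j = 3 ∨ i = 3 ∧ j = 4

/-- `G_β`: add vertices `u, a₁, a₂` (coded as `0,1,2`), with `u` adjacent to all of `G`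
and to `a₁`; `a₁ ~ a₂`. -/
def Gbeta {V : Type*} (G : SimpleGraph V) : SimpleGraph (V ⊕ Fin 3) :=
  SimpleGraph.fromRel fun x y =>
    match x, y with
    | Sum.inl a, Sum.inl b => G.Adj a b
    | Sum.inl _, Sum.inr i => i = 0
    | Sum.inr _, Sum.inl _ => False
    | Sum.inr i, Sum.inr j => i = 0 ∧ j = 1 ∨ i = 1 ∧ j = 2

/-- `G_γ`: add vertices `u, v, a₁, a₂, b₁, b₂` (coded as `0,1,2,3,4,5`), with `u ~ v`, both
adjacent to all of `G`; `u ~ a₁`, `a₁ ~ a₂`, `v ~ b₁`, `b₁ ~ b₂`. -/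
def Ggamma {V : Type*} (G : SimpleGraph V) : SimpleGraph (V ⊕ Fin 6) :=
  SimpleGraph.fromRel fun x y =>
    match x, y with
    | Sum.inl a, Sum.inl b => G.Adj a b
    | Sum.inl _, Sum.inr i => i = 0 ∨ i = 1
    | Sum.inr _, Sum.inl _ => False
    | Sum.inr i, Sum.inr j =>
        i = 0 ∧ j = 1 ∨ i = 0 ∧ j = 2 ∨ i = 2 ∧ j = 3 ∨ i = 1 ∧ j = 4 ∨ i = 4 ∧ j = 5

/-- The disjoint union of a family of graphs, on the sigma type of their vertex sets. -/
def sigmaGraph {p : ℕ} {V : Fin p → Type*} (G : ∀ i, SimpleGraph (V i)) :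
    SimpleGraph (Σ i, V i) :=
  SimpleGraph.fromRel fun x y => ∃ h : x.1 = y.1, (G y.1).Adj (h ▸ x.2) y.2

/-- The graph obtained from `H` by adding one new vertex adjacent to every vertex of `H`. -/
def joinVertex {W : Type*} (H : SimpleGraph W) : SimpleGraph (W ⊕ Unit) :=
  SimpleGraph.fromRel fun x y =>
    match x, y with
    | Sum.inl a, Sum.inl b => H.Adj a b
    | Sum.inl _, Sum.inr _ => True
    | _, _ => False
namespace Stmt7Aux

lemma meets_iff {a b c d : ℝ} (hab : a ≤ b) (hcd : c ≤ d) :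
    (Icc a b ∩ Icc c d).Nonempty ↔ a ≤ d ∧ c ≤ b := by
  rw [Set.Icc_inter_Icc, Set.nonempty_Icc, sup_le_iff, le_inf_iff, le_inf_iff]
  exact ⟨fun h => ⟨h.1.2, h.2.1⟩, fun h => ⟨⟨hab, h.1⟩, h.2, hcd⟩⟩

lemma rep_meets_iff {V : Type*} {G : SimpleGraph V} (R : IntervalRep G) {p q : V}
    (h : p ≠ q) : G.Adj p q ↔ (R.l p ≤ R.r q ∧ R.l q ≤ R.r p) := by
  rw [R.adj_iff p q h, meets_iff (R.le p) (R.le q)]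

lemma chain_injective {V : Type*} {G : SimpleGraph V} (R : IntervalRep G) {k : ℕ}
    {f : Fin k → V} (hf : ∀ i j : Fin k, i < j → R.itv (f i) ⊂ R.itv (f j)) :
    Function.Injective f := by
  intro i j hij
  rcases lt_trichotomy i j with h | h | h
  · exact absurd (congrArg R.itv hij) (hf i j h).ne
  · exact h
  · exact absurd (congrArg R.itv hij).symm (hf j i h).ne

lemma le_nuAt {V : Type*} [Fintype V] {G : SimpleGraph V} (R : IntervalRep G) (x : V) {k : ℕ}
    (f : Fin k → V) (hf : ∀ i j : Fin k, i < j → R.itv (f i) ⊂ R.itv (f j))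
    (hk : 0 < k) (hx : f ⟨k - 1, by omega⟩ = x) : k ≤ R.nuAt x := by
  apply le_csSup
  · refine ⟨Fintype.card V, ?_⟩
    rintro n ⟨g, hg, -⟩
    simpa using Fintype.card_le_of_injective g (chain_injective R hg)
  · exact ⟨f, hf, hk, hx⟩

lemma one_le_nuAt {V : Type*} [Fintype V] {G : SimpleGraph V} (R : IntervalRep G) (x : V) :
    1 ≤ R.nuAt x :=
  le_nuAt R x (fun _ => x)
    (fun i j hij => absurd (Fin.lt_def.mp hij) (by omega)) one_pos rfl

lemma nu_le {V : Type*} {G : SimpleGraph V} (R' : IntervalRep G) {k : ℕ}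
    (h : ∀ n : ℕ, (∃ f : Fin n → V, ∀ i j : Fin n, i < j → R'.itv (f i) ⊂ R'.itv (f j)) → n ≤ k) :
    nu G ≤ k :=
  le_trans (Nat.sInf_le ⟨R', rfl⟩) (csSup_le' (by rintro n ⟨f, hf⟩; exact h n ⟨f, hf⟩))

def flip {V : Type*} {G : SimpleGraph V} (R : IntervalRep G) : IntervalRep G where
  l v := -R.r v
  r v := -R.l v
  le v := neg_le_neg (R.le v)
  adj_iff p q h := by
    rw [R.adj_iff p q h, meets_iff (R.le p) (R.le q),
        meets_iff (neg_le_neg (R.le p)) (neg_le_neg (R.le q))]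
    constructor
    · rintro ⟨h1, h2⟩; constructor <;> linarith
    · rintro ⟨h1, h2⟩; constructor <;> linarith

lemma flip_itv {V : Type*} {G : SimpleGraph V} (R : IntervalRep G) (v : V) :
    (flip R).itv v = -(R.itv v) := by
  simp [IntervalRep.itv, flip, Set.neg_Icc]

lemma neg_ssubset {s t : Set ℝ} : -s ⊂ -t ↔ s ⊂ t := by
  simp [ssubset_iff_subset_not_subset, Set.neg_subset_neg]

lemma nuAt_flip {V : Type*} [Fintype V] {G : SimpleGraph V} (R : IntervalRep G) (x : V) :
    (flip R).nuAt x = R.nuAt x := by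
  unfold IntervalRep.nuAt
  congr 1
  ext k
  constructor <;> rintro ⟨f, hf, hk, hx⟩ <;> refine ⟨f, fun i j hij => ?_, hk, hx⟩
  · have h := hf i j hij
    rwa [flip_itv, flip_itv, neg_ssubset] at h
  · rw [flip_itv, flip_itv, neg_ssubset]
    exact hf i j hij

variable {V : Type*} {G : SimpleGraph V}

lemma adj_inl_inl {x y : V} : (Gbeta G).Adj (Sum.inl x) (Sum.inl y) ↔ G.Adj x y := by
  rw [Gbeta, SimpleGraph.fromRel_adj]
  constructor
  · rintro ⟨hne, h | h⟩
    · exact h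
    · exact h.symm
  · intro h
    exact ⟨by simp [h.ne], Or.inl h⟩

lemma adj_inl_inr {x : V} {i : Fin 3} : (Gbeta G).Adj (Sum.inl x) (Sum.inr i) ↔ i = 0 := by
  rw [Gbeta, SimpleGraph.fromRel_adj]
  simp

lemma adj_u_inl (x : V) : (Gbeta G).Adj (Sum.inr 0) (Sum.inl x) := by
  rw [Gbeta, SimpleGraph.fromRel_adj]
  exact ⟨by simp, Or.inr rfl⟩

lemma adj_u_a1 : (Gbeta G).Adj (Sum.inr 0) (Sum.inr 1) := by
  rw [Gbeta, SimpleGraph.fromRel_adj]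
  exact ⟨by simp, Or.inl (Or.inl ⟨rfl, rfl⟩)⟩

lemma adj_a1_a2 : (Gbeta G).Adj (Sum.inr 1) (Sum.inr 2) := by
  rw [Gbeta, SimpleGraph.fromRel_adj]
  exact ⟨by simp, Or.inl (Or.inr ⟨rfl, rfl⟩)⟩

lemma not_adj_u_a2 : ¬ (Gbeta G).Adj (Sum.inr 0) (Sum.inr 2) := by
  rw [Gbeta, SimpleGraph.fromRel_adj]
  rintro ⟨-, h | h⟩
  · rcases h with ⟨-, h⟩ | ⟨h, -⟩ <;> exact absurd h (by decide)
  · rcases h with ⟨h, -⟩ | ⟨h, -⟩ <;> exact absurd h (by decide)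


lemma aux_pt {V : Type*} [Fintype V] (G : SimpleGraph V) (R : IntervalRep (Gbeta G))
    (h : R.r (Sum.inr 0) ≤ R.l (Sum.inr 0)) :
    nu (Gbeta G) ≤ R.nuAt (Sum.inr 0) := by
  classical
  have heq : R.l (Sum.inr 0) = R.r (Sum.inr 0) := le_antisymm (R.le _) h
  have hV : ∀ x : V, False := by
    intro x
    have h1 := (rep_meets_iff R (show (Sum.inr 0 : V ⊕ Fin 3) ≠ Sum.inl x by simp)).mp (adj_u_inl x)
    have h2 := (rep_meets_iff R (show (Sum.inr 0 : V ⊕ Fin 3) ≠ Sum.inr 1 by simp)).mp adj_u_a1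
    have h3 : (Gbeta G).Adj (Sum.inl x) (Sum.inr 1) :=
      (rep_meets_iff R (show (Sum.inl x : V ⊕ Fin 3) ≠ Sum.inr 1 by simp)).mpr
        ⟨by linarith [h1.2, h2.1], by linarith [h2.2, h1.1]⟩
    have := adj_inl_inr.mp h3
    simp at this
  set L0 : V ⊕ Fin 3 → ℝ :=
    Sum.elim (fun _ => 0) (fun i => if i = 0 then 0 else if i = 1 then 1 else 2) with hL0
  set R0 : V ⊕ Fin 3 → ℝ :=
    Sum.elim (fun _ => 0) (fun i => if i = 0 then 1 else if i = 1 then 2 else 3) with hR0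
  have hle : ∀ v, L0 v ≤ R0 v := by
    rintro (x | i)
    · exact (hV x).elim
    · fin_cases i <;> norm_num [hL0, hR0]
  have hadj : ∀ p q : V ⊕ Fin 3, p ≠ q →
      ((Gbeta G).Adj p q ↔ (Icc (L0 p) (R0 p) ∩ Icc (L0 q) (R0 q)).Nonempty) := by
    rintro (x | i) (y | j) hpq
    · exact (hV x).elim
    · exact (hV x).elim
    · exact (hV y).elim
    · rw [meets_iff (hle _) (hle _)]
      fin_cases i <;> fin_cases j
      · exact absurd rfl hpq
      · exact iff_of_true adj_u_a1 (by norm_num [hL0, hR0])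
      · exact iff_of_false not_adj_u_a2 (by norm_num [hL0, hR0])
      · exact iff_of_true adj_u_a1.symm (by norm_num [hL0, hR0])
      · exact absurd rfl hpq
      · exact iff_of_true adj_a1_a2 (by norm_num [hL0, hR0])
      · exact iff_of_false (fun hc => not_adj_u_a2 hc.symm) (by norm_num [hL0, hR0])
      · exact iff_of_true adj_a1_a2.symm (by norm_num [hL0, hR0])
      · exact absurd rfl hpq
  refine le_trans (nu_le (⟨L0, R0, hle, hadj⟩ : IntervalRep (Gbeta G)) ?_) (one_le_nuAt R _)
  rintro n ⟨f, hf⟩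
  by_contra hcon
  push_neg at hcon
  have h01 := hf ⟨0, by omega⟩ ⟨1, by omega⟩ (by rw [Fin.lt_def]; norm_num)
  have hsub := (Set.Icc_subset_Icc_iff (hle _)).mp h01.subset
  rcases hp : f ⟨0, by omega⟩ with x | i
  · exact hV x
  rcases hq : f ⟨1, by omega⟩ with y | j
  · exact hV y
  rw [hp, hq] at h01 hsub
  fin_cases i <;> fin_cases j <;>
    first
      | exact h01.ne rfl
      | (revert hsub; norm_num [IntervalRep.itv, hL0, hR0])


lemma aux_main {V : Type*} [Fintype V] (G : SimpleGraph V) (R : IntervalRep (Gbeta G))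
    (h1 : R.l (Sum.inr 0) < R.r (Sum.inr 0))
    (h2 : R.r (Sum.inr 0) < R.l (Sum.inr 2)) :
    nu (Gbeta G) ≤ R.nuAt (Sum.inr 0) := by
  classical
  have hA1 := (rep_meets_iff R (show (Sum.inr 0 : V ⊕ Fin 3) ≠ Sum.inr 1 by simp)).mp adj_u_a1
  -- hA1 : R.l u ≤ R.r a1 ∧ R.l a1 ≤ R.r u
  have hA12 := (rep_meets_iff R (show (Sum.inr 1 : V ⊕ Fin 3) ≠ Sum.inr 2 by simp)).mp adj_a1_a2
  -- hA12 : R.l a1 ≤ R.r a2 ∧ R.l a2 ≤ R.r a1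
  have hux : ∀ x : V, R.l (Sum.inr 0) ≤ R.r (Sum.inl x) ∧ R.l (Sum.inl x) ≤ R.r (Sum.inr 0) :=
    fun x => (rep_meets_iff R (show (Sum.inr 0 : V ⊕ Fin 3) ≠ Sum.inl x by simp)).mp (adj_u_inl x)
  have hxa1 : ∀ x : V, R.r (Sum.inl x) < R.l (Sum.inr 1) := by
    intro x
    by_contra hcon
    push_neg at hcon
    have h3 : (Gbeta G).Adj (Sum.inl x) (Sum.inr 1) :=
      (rep_meets_iff R (show (Sum.inl x : V ⊕ Fin 3) ≠ Sum.inr 1 by simp)).mpr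
        ⟨by linarith [(hux x).2, hA12.2], hcon⟩
    have := adj_inl_inr.mp h3
    simp at this
  set s : ℝ := (insert (R.l (Sum.inr 0)) (Finset.univ.image fun x : V => R.r (Sum.inl x))).max'
      (Finset.insert_nonempty _ _) with hs
  have hs_lu : R.l (Sum.inr 0) ≤ s := by
    rw [hs]
    exact Finset.le_max' _ _ (Finset.mem_insert_self _ _)
  have hs_x : ∀ x : V, R.r (Sum.inl x) ≤ s := by
    intro x
    rw [hs]
    exact Finset.le_max' _ _
      (Finset.mem_insert_of_mem (Finset.mem_image_of_mem (fun x : V => R.r (Sum.inl x)) (Finset.mem_univ x)))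
  have fin3 : ∀ i : Fin 3, i = 0 ∨ i = 1 ∨ i = 2 := by decide
  have hs_ru : s < R.r (Sum.inr 0) := by
    have hmem : s ∈ insert (R.l (Sum.inr 0)) (Finset.univ.image fun x : V => R.r (Sum.inl x)) := by
      rw [hs]; exact Finset.max'_mem _ _
    rcases Finset.mem_insert.mp hmem with hb | hb
    · rw [hb]; exact h1
    · obtain ⟨x, -, hbx⟩ := Finset.mem_image.mp hb
      rw [← hbx]
      linarith [hxa1 x, hA1.2]
  set L : V ⊕ Fin 3 → ℝ := Sum.elim
      (fun x => if R.l (Sum.inl x) < R.l (Sum.inr 0)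
        then R.l (Sum.inr 0) - Real.exp (-(R.r (Sum.inl x)))
        else R.l (Sum.inl x))
      (fun i => if i = 0 then R.l (Sum.inr 0)
        else if i = 1 then (s + R.r (Sum.inr 0)) / 2 else R.r (Sum.inr 1)) with hL
  set Rr : V ⊕ Fin 3 → ℝ := Sum.elim (fun x => R.r (Sum.inl x))
      (fun i => if i = 0 then R.r (Sum.inr 0)
        else if i = 1 then R.r (Sum.inr 1) else R.r (Sum.inr 1) + 1) with hR
  -- evaluation lemmas
  have eL0 : L (Sum.inr 0) = R.l (Sum.inr 0) := by norm_num [hL]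
  have eL1 : L (Sum.inr 1) = (s + R.r (Sum.inr 0)) / 2 := by norm_num [hL]
  have eL2 : L (Sum.inr 2) = R.r (Sum.inr 1) := by norm_num [hL, show (2 : Fin 3) ≠ 0 by decide, show (2 : Fin 3) ≠ 1 by decide]
  have eR0 : Rr (Sum.inr 0) = R.r (Sum.inr 0) := by norm_num [hR]
  have eR1 : Rr (Sum.inr 1) = R.r (Sum.inr 1) := by norm_num [hR]
  have eR2 : Rr (Sum.inr 2) = R.r (Sum.inr 1) + 1 := by norm_num [hR, show (2 : Fin 3) ≠ 0 by decide, show (2 : Fin 3) ≠ 1 by decide]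
  have eRx : ∀ x : V, Rr (Sum.inl x) = R.r (Sum.inl x) := fun x => rfl
  have eLxC : ∀ x : V, R.l (Sum.inl x) < R.l (Sum.inr 0) →
      L (Sum.inl x) = R.l (Sum.inr 0) - Real.exp (-(R.r (Sum.inl x))) := by
    intro x hx
    simp only [hL, Sum.elim_inl, if_pos hx]
  have eLxP : ∀ x : V, ¬ (R.l (Sum.inl x) < R.l (Sum.inr 0)) →
      L (Sum.inl x) = R.l (Sum.inl x) := by
    intro x hx
    simp only [hL, Sum.elim_inl, if_neg hx]
  have hLx_lt : ∀ x : V, L (Sum.inl x) < R.l (Sum.inr 0) ∨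
      (L (Sum.inl x) = R.l (Sum.inl x) ∧ R.l (Sum.inr 0) ≤ R.l (Sum.inl x)) := by
    intro x
    by_cases hx : R.l (Sum.inl x) < R.l (Sum.inr 0)
    · left
      rw [eLxC x hx]
      linarith [Real.exp_pos (-(R.r (Sum.inl x)))]
    · right
      exact ⟨eLxP x hx, not_lt.mp hx⟩
  have hLx_rx : ∀ x : V, L (Sum.inl x) ≤ R.r (Sum.inl x) := by
    intro x
    by_cases hx : R.l (Sum.inl x) < R.l (Sum.inr 0)
    · rw [eLxC x hx]
      linarith [Real.exp_pos (-(R.r (Sum.inl x))), (hux x).1]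
    · rw [eLxP x hx]
      exact R.le _
  have hLx : ∀ (x : V) (t : ℝ), R.l (Sum.inr 0) ≤ t →
      (L (Sum.inl x) ≤ t ↔ R.l (Sum.inl x) ≤ t) := by
    intro x t ht
    by_cases hx : R.l (Sum.inl x) < R.l (Sum.inr 0)
    · rw [eLxC x hx]
      constructor
      · intro _; linarith
      · intro _; linarith [Real.exp_pos (-(R.r (Sum.inl x)))]
    · rw [eLxP x hx]
  have hLR : ∀ v, L v ≤ Rr v := by
    rintro (x | i)
    · exact hLx_rx x
    · rcases fin3 i with rfl | rfl | rfl
      · rw [eL0, eR0]; exact R.le _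
      · rw [eL1, eR1]; linarith [hA12.2]
      · rw [eL2, eR2]; linarith
  -- the adjacency condition in endpoint form
  have key : ∀ p q : V ⊕ Fin 3, p ≠ q →
      ((Gbeta G).Adj p q ↔ (L p ≤ Rr q ∧ L q ≤ Rr p)) := by
    have keyL : ∀ (x : V) (j : Fin 3),
        ((Gbeta G).Adj (Sum.inl x) (Sum.inr j) ↔
          (L (Sum.inl x) ≤ Rr (Sum.inr j) ∧ L (Sum.inr j) ≤ Rr (Sum.inl x))) := by
      intro x j
      rcases fin3 j with rfl | rfl | rfl
      · refine iff_of_true (adj_inl_inr.mpr rfl) ⟨?_, ?_⟩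
        · rw [eR0, hLx x _ (R.le _)]
          exact (hux x).2
        · rw [eL0, eRx]
          exact (hux x).1
      · refine iff_of_false (by rw [adj_inl_inr]; decide) ?_
        rintro ⟨-, hb⟩
        rw [eL1, eRx] at hb
        linarith [hs_x x, hs_ru]
      · refine iff_of_false (by rw [adj_inl_inr]; decide) ?_
        rintro ⟨-, hb⟩
        rw [eL2, eRx] at hb
        linarith [hs_x x, hs_ru, h2, hA12.2]
    rintro (x | i) (y | j) hpq
    · rw [rep_meets_iff R hpq, eRx, eRx,
        hLx x _ (hux y).1, hLx y _ (hux x).1]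
    · exact keyL x j
    · rw [SimpleGraph.adj_comm, and_comm]
      exact keyL y i
    · rcases fin3 i with rfl | rfl | rfl <;>
        rcases fin3 j with rfl | rfl | rfl
      · exact absurd rfl hpq
      · refine iff_of_true adj_u_a1 ⟨?_, ?_⟩
        · rw [eL0, eR1]; exact hA1.1
        · rw [eL1, eR0]; linarith
      · refine iff_of_false not_adj_u_a2 ?_
        rintro ⟨-, hb⟩
        rw [eL2, eR0] at hb
        linarith [hA12.2]
      · refine iff_of_true adj_u_a1.symm ⟨?_, ?_⟩
        · rw [eL1, eR0]; linarith
        · rw [eL0, eR1]; exact hA1.1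
      · exact absurd rfl hpq
      · refine iff_of_true adj_a1_a2 ⟨?_, ?_⟩
        · rw [eL1, eR2]; linarith [hA12.2]
        · rw [eL2, eR1]
      · refine iff_of_false (fun hc => not_adj_u_a2 hc.symm) ?_
        rintro ⟨hb, -⟩
        rw [eL2, eR0] at hb
        linarith [hA12.2]
      · refine iff_of_true adj_a1_a2.symm ⟨?_, ?_⟩
        · rw [eL2, eR1]
        · rw [eL1, eR2]; linarith [hA12.2]
      · exact absurd rfl hpq
  have adj2 : ∀ p q : V ⊕ Fin 3, p ≠ q →
      ((Gbeta G).Adj p q ↔ (Icc (L p) (Rr p) ∩ Icc (L q) (Rr q)).Nonempty) := by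
    intro p q hpq
    rw [key p q hpq, meets_iff (hLR p) (hLR q)]
  set R2 : IntervalRep (Gbeta G) := ⟨L, Rr, hLR, adj2⟩ with hR2
  -- containment analysis: a strictly contained interval belongs to a "plain" G-vertex
  have hcont : ∀ p q : V ⊕ Fin 3, Icc (L p) (Rr p) ⊂ Icc (L q) (Rr q) →
      ∃ x : V, p = Sum.inl x ∧ R.l (Sum.inr 0) ≤ R.l (Sum.inl x) := by
    intro p q hsub
    have hne := hsub.ne
    obtain ⟨hl, hr⟩ := (Set.Icc_subset_Icc_iff (hLR p)).mp hsub.subset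
    rcases p with x | i
    · refine ⟨x, rfl, ?_⟩
      by_contra hC
      push_neg at hC
      have hLp := eLxC x hC
      rcases q with y | j
      · by_cases hCy : R.l (Sum.inl y) < R.l (Sum.inr 0)
        · have hLq := eLxC y hCy
          rw [hLp, hLq] at hl
          have hexp : Real.exp (-(R.r (Sum.inl x))) ≤ Real.exp (-(R.r (Sum.inl y))) := by
            linarith
          have hyx : R.r (Sum.inl y) ≤ R.r (Sum.inl x) := by
            have := Real.exp_le_exp.mp hexp
            linarith
          rw [eRx, eRx] at hr
          have hrr : R.r (Sum.inl x) = R.r (Sum.inl y) := le_antisymm hr hyx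
          refine hne ?_
          rw [eRx, eRx, hrr, hLp, hLq, hrr]
        · rw [hLp, eLxP y hCy] at hl
          push_neg at hCy
          linarith [Real.exp_pos (-(R.r (Sum.inl x)))]
      · rcases fin3 j with rfl | rfl | rfl
        · rw [hLp, eL0] at hl
          linarith [Real.exp_pos (-(R.r (Sum.inl x)))]
        · rw [hLp, eL1] at hl
          linarith [Real.exp_pos (-(R.r (Sum.inl x))), hs_lu, hs_ru]
        · rw [hLp, eL2] at hl
          linarith [Real.exp_pos (-(R.r (Sum.inl x))), hA12.2]
    · exfalso
      rcases fin3 i with rfl | rfl | rfl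
      · rw [eR0] at hr
        rcases q with y | j
        · rw [eRx] at hr
          linarith [hs_x y, hs_ru]
        · rcases fin3 j with rfl | rfl | rfl
          · rw [eL0] at hl
            rw [eR0] at hr
            exact hne rfl
          · rw [eL1] at hl
            rw [eL0] at hl
            linarith
          · rw [eL2] at hl
            rw [eL0] at hl
            linarith [hA12.2]
      · rw [eR1] at hr
        rcases q with y | j
        · rw [eRx] at hr
          linarith [hs_x y, hs_ru, hA12.2]
        · rcases fin3 j with rfl | rfl | rfl
          · rw [eR0] at hr
            linarith [hA12.2]
          · exact hne rfl
          · rw [eL2, eL1] at hl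
            linarith [hA12.2]
      · rw [eR2] at hr
        rcases q with y | j
        · rw [eRx] at hr
          linarith [hs_x y, hs_ru, hA12.2]
        · rcases fin3 j with rfl | rfl | rfl
          · rw [eR0] at hr
            linarith [hA12.2]
          · rw [eR1] at hr
            linarith
          · exact hne rfl
  -- conclude
  apply nu_le R2
  rintro n ⟨f, hf⟩
  rcases Nat.eq_zero_or_pos n with rfl | hn
  · exact Nat.zero_le _
  have htop : ∀ i : Fin n, (i : ℕ) < n - 1 →
      ∃ x : V, f i = Sum.inl x ∧ R.l (Sum.inr 0) ≤ R.l (Sum.inl x) := by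
    intro i hi
    exact hcont _ _ (hf i ⟨n - 1, by omega⟩ (by rw [Fin.lt_def]; exact hi))
  set g : Fin n → V ⊕ Fin 3 := fun i => if (i : ℕ) < n - 1 then f i else Sum.inr 0 with hg
  have hgchain : ∀ i j : Fin n, i < j → R.itv (g i) ⊂ R.itv (g j) := by
    intro i j hij
    have hij' : (i : ℕ) < (j : ℕ) := Fin.lt_def.mp hij
    have hi : (i : ℕ) < n - 1 := by omega
    obtain ⟨x, hfx, hxP⟩ := htop i hi
    have hgi : g i = Sum.inl x := by rw [hg]; simp only [if_pos hi]; exact hfx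
    have ex : Icc (L (Sum.inl x)) (Rr (Sum.inl x)) = R.itv (Sum.inl x) := by
      rw [eLxP x (not_lt.mpr hxP), eRx, IntervalRep.itv]
    by_cases hj : (j : ℕ) < n - 1
    · obtain ⟨y, hfy, hyP⟩ := htop j hj
      have hgj : g j = Sum.inl y := by rw [hg]; simp only [if_pos hj]; exact hfy
      have ey : Icc (L (Sum.inl y)) (Rr (Sum.inl y)) = R.itv (Sum.inl y) := by
        rw [eLxP y (not_lt.mpr hyP), eRx, IntervalRep.itv]
      have hch := hf i j hij
      rw [hfx, hfy] at hch
      rw [hgi, hgj, ← ex, ← ey]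
      exact hch
    · have hgj : g j = Sum.inr 0 := by rw [hg]; simp only [if_neg hj]
      rw [hgi, hgj]
      refine HasSubset.Subset.ssubset_of_ne ?_ ?_
      · rw [IntervalRep.itv, IntervalRep.itv]
        exact Set.Icc_subset_Icc hxP (by linarith [hs_x x, hs_ru])
      · intro heq
        have hmem : R.r (Sum.inr 0) ∈ Icc (R.l (Sum.inl x)) (R.r (Sum.inl x)) := by
          rw [show Icc (R.l (Sum.inl x)) (R.r (Sum.inl x)) = R.itv (Sum.inl x) from rfl, heq]
          exact ⟨le_of_lt h1, le_refl _⟩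
        linarith [hmem.2, hs_x x, hs_ru]
  have hgtop : g ⟨n - 1, by omega⟩ = Sum.inr 0 := by
    rw [hg]
    simp
  exact le_nuAt R (Sum.inr 0) g hgchain hn hgtop

end Stmt7Aux

/-- for every representation `R` of `G_β`, `ν_R(u) ≥ ν(G_β)`. -/
theorem stmt_7 {V : Type*} [Fintype V] (G : SimpleGraph V)
    (R : IntervalRep (Gbeta G)) :
    nu (Gbeta G) ≤ R.nuAt (Sum.inr 0) := by
  by_cases hdeg : R.r (Sum.inr 0) ≤ R.l (Sum.inr 0)
  · exact Stmt7Aux.aux_pt G R hdeg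
  · push_neg at hdeg
    have hne02 : (Sum.inr 0 : V ⊕ Fin 3) ≠ Sum.inr 2 := by simp
    have hdisj : R.r (Sum.inr 0) < R.l (Sum.inr 2) ∨ R.r (Sum.inr 2) < R.l (Sum.inr 0) := by
      by_contra hcon
      push_neg at hcon
      exact Stmt7Aux.not_adj_u_a2
        ((Stmt7Aux.rep_meets_iff R hne02).mpr ⟨hcon.2, hcon.1⟩)
    rcases hdisj with hcase | hcase
    · exact Stmt7Aux.aux_main G R hdeg hcase
    · have h := Stmt7Aux.aux_main G (Stmt7Aux.flip R)
        (by simpa [Stmt7Aux.flip] using neg_lt_neg hdeg)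
        (by simpa [Stmt7Aux.flip] using neg_lt_neg hcase)
      rwa [Stmt7Aux.nuAt_flip] at h
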